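/- Let n ∈ ℕ and m ∈ {0,…,2n}. Let A ⊆ ℝ^{2n} be countably m-rectifiable and let B ⊆ ℝ^{2n} be (2n−m)-negligible. Then there exists a vector v₀ ∈ ℝ^{2n} such that for Lebesgue-almost every t ∈ ℝ one has (A + t·v₀) ∩ B = ∅; that is, the set {t ∈ ℝ : ∃ a ∈ A, a + t·v₀ ∈ B} has one-dimensional Lebesgue measure zero. -/

import Mathlib

open Set MeasureTheory

/-- A subset `A` of a metric space is countably `m`-rectifiable iff it is the union of the
images of countably many Lipschitz maps, each defined on some subset of `ℝ^m`. -/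
def CountablyRectifiable (m : ℕ) {X : Type*} [MetricSpace X] (A : Set X) : Prop :=
  ∃ (S : ℕ → Set (EuclideanSpace ℝ (Fin m))) (f : ∀ i, S i → X) (C : ℕ → NNReal),
    (∀ i, LipschitzWith (C i) (f i)) ∧ A = ⋃ i, Set.range (f i)

open Filter
open scoped ENNReal NNReal Topology

section Auxiliary


lemma grid_cover (m : ℕ) (R r : ℝ) (hR : 0 ≤ R) (hr : 0 < r) :
    ∃ (ι : Type) (_ : Fintype ι) (c : ι → Set (Fin m → ℝ)),
      (Metric.closedBall (0 : Fin m → ℝ) R ⊆ ⋃ i, c i) ∧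
      (∀ i, EMetric.diam (c i) ≤ ENNReal.ofReal r) ∧
      ((Fintype.card ι : ℝ) * r ^ m ≤ (2*R + 3*r) ^ m) := by
  classical
  set K : ℤ := ⌈R / r⌉ with hK
  have hK0 : (0:ℤ) ≤ K := Int.ceil_nonneg (div_nonneg hR hr.le)
  refine ⟨Fin m → ((Finset.Icc (-K) K : Finset ℤ) : Type), inferInstance,
    fun k => Set.pi Set.univ (fun i => Set.Icc (((k i : ℤ) : ℝ) * r) (((k i : ℤ) : ℝ) * r + r)),
    ?_, ?_, ?_⟩
  · intro x hx
    have hco : ∀ i, |x i| ≤ R := by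
      intro i
      have h1 : dist (x i) 0 ≤ dist x 0 := dist_le_pi_dist x 0 i
      have h2 : dist x 0 ≤ R := Metric.mem_closedBall.mp hx
      simpa [Real.dist_eq] using h1.trans h2
    have hmem : ∀ i, ⌊x i / r⌋ ∈ Finset.Icc (-K) K := by
      intro i
      rw [Finset.mem_Icc]
      constructor
      · apply Int.le_floor.mpr
        have h1 : -R ≤ x i := (abs_le.mp (hco i)).1
        have h2 : (R/r) ≤ (K:ℝ) := Int.le_ceil _
        have h3 : -R / r ≤ x i / r := by gcongr
        push_cast
        calc -(K : ℝ) ≤ -(R/r) := by linarith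
          _ = -R / r := (neg_div _ _).symm
          _ ≤ x i / r := h3
      · have h1 : (⌊x i / r⌋ : ℝ) ≤ x i / r := Int.floor_le _
        have h2 : x i / r ≤ R / r := by gcongr; exact (abs_le.mp (hco i)).2
        have h3 : (R / r : ℝ) ≤ (K : ℝ) := Int.le_ceil _
        exact_mod_cast h1.trans (h2.trans h3)
    refine Set.mem_iUnion.mpr ⟨fun i => ⟨⌊x i / r⌋, hmem i⟩, ?_⟩
    refine Set.mem_univ_pi.mpr fun i => ?_
    constructor
    · have := Int.floor_le (x i / r)
      calc (⌊x i / r⌋ : ℝ) * r ≤ (x i / r) * r := by nlinarith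
        _ = x i := div_mul_cancel₀ _ hr.ne'
    · have := (Int.lt_floor_add_one (x i / r)).le
      calc x i = (x i / r) * r := (div_mul_cancel₀ _ hr.ne').symm
        _ ≤ ((⌊x i / r⌋ : ℝ) + 1) * r := by nlinarith
        _ = (⌊x i / r⌋ : ℝ) * r + r := by ring
  · intro k
    apply EMetric.diam_le
    intro x hx y hy
    rw [edist_dist]
    apply ENNReal.ofReal_le_ofReal
    rw [dist_pi_le_iff hr.le]
    intro i
    have hxi := Set.mem_univ_pi.mp hx i
    have hyi := Set.mem_univ_pi.mp hy i
    rw [Real.dist_eq, abs_sub_le_iff]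
    constructor <;> [skip; skip] <;>
      · obtain ⟨a1, a2⟩ := hxi; obtain ⟨b1, b2⟩ := hyi; linarith
  · have hcard : Fintype.card (Fin m → ((Finset.Icc (-K) K : Finset ℤ) : Type))
        = (Finset.Icc (-K) K).card ^ m := by
      rw [Fintype.card_fun]
      simp [Fintype.card_coe]
    rw [hcard, Int.card_Icc]
    have heq : K + 1 - -K = 2*K + 1 := by ring
    rw [heq]
    have hKn : (((2*K + 1).toNat : ℕ) : ℝ) = 2 * (K:ℝ) + 1 := by
      have h := Int.toNat_of_nonneg (show (0:ℤ) ≤ 2*K+1 by omega)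
      exact_mod_cast congrArg (Int.cast : ℤ → ℝ) h
    push_cast [hKn]
    rw [← mul_pow]
    apply pow_le_pow_left₀ (by positivity)
    have hceil : (K : ℝ) ≤ R / r + 1 := (Int.ceil_lt_add_one _).le
    have : (2 * (K:ℝ) + 1) * r ≤ (2 * (R/r + 1) + 1) * r := by nlinarith
    calc (2 * (K:ℝ) + 1) * r ≤ (2 * (R/r+1) + 1) * r := this
      _ = 2 * ((R/r) * r) + 3 * r := by ring
      _ = 2 * R + 3 * r := by rw [div_mul_cancel₀ _ hr.ne']

lemma diam_prod_le {X Y : Type*} [PseudoEMetricSpace X] [PseudoEMetricSpace Y]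
    (s : Set X) (t : Set Y) :
    EMetric.diam (s ×ˢ t) ≤ max (EMetric.diam s) (EMetric.diam t) := by
  apply EMetric.diam_le
  rintro ⟨a, b⟩ ⟨ha, hb⟩ ⟨a', b'⟩ ⟨ha', hb'⟩
  rw [Prod.edist_eq]
  exact max_le_max (EMetric.edist_le_diam_of_mem ha ha') (EMetric.edist_le_diam_of_mem hb hb')

lemma exists_cover_of_hausdorff_zero {Y : Type*} [EMetricSpace Y] [MeasurableSpace Y]
    [BorelSpace Y] {t : ℝ} (ht : 0 < t) {B : Set Y} (hB : μH[t] B = 0)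
    {r ε : ℝ≥0∞} (hr : 0 < r) (hε : 0 < ε) :
    ∃ E : ℕ → Set Y, B ⊆ ⋃ j, E j ∧ (∀ j, EMetric.diam (E j) ≤ r) ∧
      ∑' j, EMetric.diam (E j) ^ t ≤ ε := by
  rw [MeasureTheory.Measure.hausdorffMeasure_apply] at hB
  have h1 : (⨅ (E : ℕ → Set Y) (_ : B ⊆ ⋃ n, E n) (_ : ∀ n, EMetric.diam (E n) ≤ r),
      ∑' n, ⨆ _ : (E n).Nonempty, EMetric.diam (E n) ^ t) = 0 := by
    refine le_antisymm ?_ zero_le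
    rw [← hB]
    exact le_iSup₂ (f := fun r (_ : 0 < r) => ⨅ (E : ℕ → Set Y) (_ : B ⊆ ⋃ n, E n)
      (_ : ∀ n, EMetric.diam (E n) ≤ r),
      ∑' n, ⨆ _ : (E n).Nonempty, EMetric.diam (E n) ^ t) r hr
  have h2 : (⨅ (E : ℕ → Set Y) (_ : B ⊆ ⋃ n, E n) (_ : ∀ n, EMetric.diam (E n) ≤ r),
      ∑' n, ⨆ _ : (E n).Nonempty, EMetric.diam (E n) ^ t) < ε := h1 ▸ hε
  rw [iInf_lt_iff] at h2
  obtain ⟨E, hE⟩ := h2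
  rw [iInf_lt_iff] at hE
  obtain ⟨hcov, hE⟩ := hE
  rw [iInf_lt_iff] at hE
  obtain ⟨hdiam, hE⟩ := hE
  refine ⟨E, hcov, hdiam, ?_⟩
  have : ∀ j, EMetric.diam (E j) ^ t = ⨆ _ : (E j).Nonempty, EMetric.diam (E j) ^ t := by
    intro j
    rcases (E j).eq_empty_or_nonempty with h | h
    · simp [h, EMetric.diam, Metric.ediam_empty, ENNReal.zero_rpow_of_pos ht]
    · simp [h]
  calc ∑' j, EMetric.diam (E j) ^ t
      = ∑' j, ⨆ _ : (E j).Nonempty, EMetric.diam (E j) ^ t := by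
        exact tsum_congr this
    _ ≤ ε := hE.le

lemma prod_cover_exists {Y : Type*} [EMetricSpace Y] [MeasurableSpace Y] [BorelSpace Y]
    (m : ℕ) {t : ℝ} (ht : 0 < t) {B : Set Y} (hB : μH[t] B = 0)
    {R : ℝ} (hR : 0 ≤ R) {r ε : ℝ≥0∞} (hr : 0 < r) (hε : 0 < ε) :
    ∃ (ι : Type) (_ : Countable ι) (U : ι → Set ((Fin m → ℝ) × Y)),
      ((Metric.closedBall (0 : Fin m → ℝ) R) ×ˢ B ⊆ ⋃ i, U i) ∧
      (∀ i, EMetric.diam (U i) ≤ r) ∧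
      ∑' i, EMetric.diam (U i) ^ ((m:ℝ) + t) ≤ ε := by
  classical
  -- replace r, ε by their mins with 1
  set r' : ℝ≥0∞ := min r 1 with hr'def
  have hr' : 0 < r' := lt_min hr one_pos
  have hr'le1 : r' ≤ 1 := min_le_right _ _
  have hr'ler : r' ≤ r := min_le_left _ _
  have hr'top : r' ≠ ∞ := (hr'le1.trans_lt ENNReal.one_lt_top).ne
  set M : ℝ≥0∞ := ENNReal.ofReal ((2*R+3)^m) with hMdef
  have hMtop : M ≠ ∞ := ENNReal.ofReal_ne_top
  set ε₁ : ℝ≥0∞ := (min ε 1) / (2*(M+1)) with hε₁def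
  have h2M0 : (2*(M+1) : ℝ≥0∞) ≠ 0 := by simp
  have h2Mtop : (2*(M+1) : ℝ≥0∞) ≠ ∞ := by
    refine ENNReal.mul_ne_top (by simp) (ENNReal.add_ne_top.mpr ⟨hMtop, ENNReal.one_ne_top⟩)
  have hε₁pos : 0 < ε₁ := ENNReal.div_pos (lt_min hε one_pos).ne' h2Mtop
  have hε₁top : ε₁ ≠ ∞ := by
    have h1 : (min ε 1 : ℝ≥0∞) ≠ ∞ := ((min_le_right _ _).trans_lt ENNReal.one_lt_top).ne
    exact (ENNReal.div_lt_top h1 h2M0).ne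
  obtain ⟨E, hEcov, hEdiam, hEsum⟩ := exists_cover_of_hausdorff_zero ht hB hr' hε₁pos
  -- enlarged side lengths
  set c : ℕ → ℝ≥0∞ := fun j => ε₁ * 2⁻¹ ^ (j+1) with hcdef
  have hc0 : ∀ j, 0 < c j := fun j => ENNReal.mul_pos hε₁pos.ne' (by simp)
  have hctop : ∀ j, c j ≠ ∞ := fun j =>
    ENNReal.mul_ne_top hε₁top (by simp [ENNReal.inv_ne_top])
  set s : ℕ → ℝ≥0∞ := fun j => max (EMetric.diam (E j)) (min r' (c j ^ (1/t))) with hsdef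
  have hs0 : ∀ j, 0 < s j := fun j =>
    lt_max_of_lt_right (lt_min hr' (ENNReal.rpow_pos (hc0 j) (hctop j)))
  have hsr' : ∀ j, s j ≤ r' := fun j => max_le (hEdiam j) (min_le_left _ _)
  have hstop : ∀ j, s j ≠ ∞ := fun j => ((hsr' j).trans_lt (hr'top.lt_top)).ne
  set ρ : ℕ → ℝ := fun j => (s j).toReal with hρdef
  have hρ0 : ∀ j, 0 < ρ j := fun j => ENNReal.toReal_pos (hs0 j).ne' (hstop j)
  have hρ1 : ∀ j, ρ j ≤ 1 := fun j => by
    have := ENNReal.toReal_mono hr'top (hsr' j)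
    calc ρ j ≤ r'.toReal := this
      _ ≤ 1 := by
        rw [hr'def]
        exact (ENNReal.toReal_mono ENNReal.one_ne_top (min_le_right r 1)).trans (by simp)
  have hofReal : ∀ j, ENNReal.ofReal (ρ j) = s j := fun j => ENNReal.ofReal_toReal (hstop j)
  choose ι hι cube hcov hdiam hcard using fun j => grid_cover m R (ρ j) hR (hρ0 j)
  letI : ∀ j, Fintype (ι j) := fun j => hι j
  refine ⟨(Σ j, ι j), inferInstance, fun p => cube p.1 p.2 ×ˢ E p.1, ?_, ?_, ?_⟩
  · rintro ⟨x, y⟩ ⟨hx, hy⟩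
    obtain ⟨j, hyj⟩ := Set.mem_iUnion.mp (hEcov hy)
    obtain ⟨k, hk⟩ := Set.mem_iUnion.mp (hcov j hx)
    exact Set.mem_iUnion.mpr ⟨⟨j, k⟩, ⟨hk, hyj⟩⟩
  · rintro ⟨j, k⟩
    refine (diam_prod_le _ _).trans (max_le ?_ ?_)
    · exact ((hdiam j k).trans_eq (hofReal j)).trans ((hsr' j).trans hr'ler)
    · exact (hEdiam j).trans hr'ler
  · have hdiamprod : ∀ (j) (k : ι j), EMetric.diam (cube j k ×ˢ E j) ≤ s j := by
      intro j k
      refine (diam_prod_le _ _).trans (max_le ?_ (le_max_left _ _))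
      exact (hdiam j k).trans_eq (hofReal j)
    have hterm : ∀ j, (Fintype.card (ι j) : ℝ≥0∞) * s j ^ ((m:ℝ) + t) ≤ M * (EMetric.diam (E j) ^ t + c j) := by
      intro j
      have h1 : s j ^ ((m:ℝ) + t) = s j ^ (m:ℝ) * s j ^ t :=
        ENNReal.rpow_add _ _ (hs0 j).ne' (hstop j)
      have h2 : (Fintype.card (ι j) : ℝ≥0∞) * s j ^ (m:ℝ) ≤ M := by
        rw [← hofReal j, ENNReal.rpow_natCast, ← ENNReal.ofReal_pow (hρ0 j).le,
          ← ENNReal.ofReal_natCast, ← ENNReal.ofReal_mul (by positivity)]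
        apply ENNReal.ofReal_le_ofReal
        refine (hcard j).trans ?_
        apply pow_le_pow_left₀ (by positivity)
        linarith [hρ1 j]
      have h3 : s j ^ t ≤ EMetric.diam (E j) ^ t + c j := by
        have hmono : Monotone (fun x : ℝ≥0∞ => x ^ t) := fun a b hab =>
          ENNReal.rpow_le_rpow hab ht.le
        have : s j ^ t = max (EMetric.diam (E j) ^ t) ((min r' (c j ^ (1/t))) ^ t) :=
          hmono.map_max
        rw [this]
        apply max_le (le_add_right le_rfl)
        refine le_add_left ?_
        calc (min r' (c j ^ (1/t))) ^ t ≤ (c j ^ (1/t)) ^ t :=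
              ENNReal.rpow_le_rpow (min_le_right _ _) ht.le
          _ = c j := by
              rw [← ENNReal.rpow_mul, one_div, inv_mul_cancel₀ ht.ne', ENNReal.rpow_one]
      calc (Fintype.card (ι j) : ℝ≥0∞) * s j ^ ((m:ℝ) + t)
          = ((Fintype.card (ι j) : ℝ≥0∞) * s j ^ (m:ℝ)) * s j ^ t := by rw [h1]; ring
        _ ≤ M * (EMetric.diam (E j) ^ t + c j) := mul_le_mul' h2 h3
    calc ∑' (p : Σ j, ι j), EMetric.diam (cube p.1 p.2 ×ˢ E p.1) ^ ((m:ℝ) + t)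
        = ∑' j, ∑' (k : ι j), EMetric.diam (cube j k ×ˢ E j) ^ ((m:ℝ) + t) :=
          ENNReal.tsum_sigma' _
      _ ≤ ∑' j, (Fintype.card (ι j) : ℝ≥0∞) * s j ^ ((m:ℝ) + t) := by
          apply ENNReal.tsum_le_tsum
          intro j
          rw [tsum_fintype]
          calc ∑ k : ι j, EMetric.diam (cube j k ×ˢ E j) ^ ((m:ℝ) + t)
              ≤ ∑ _k : ι j, s j ^ ((m:ℝ) + t) := by
                apply Finset.sum_le_sum
                intro k _
                exact ENNReal.rpow_le_rpow (hdiamprod j k) (by positivity)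
            _ = (Fintype.card (ι j) : ℝ≥0∞) * s j ^ ((m:ℝ) + t) := by
                rw [Finset.sum_const, nsmul_eq_mul]
                simp
      _ ≤ ∑' j, M * (EMetric.diam (E j) ^ t + c j) := ENNReal.tsum_le_tsum hterm
      _ = M * ((∑' j, EMetric.diam (E j) ^ t) + ∑' j, c j) := by
          rw [ENNReal.tsum_mul_left, ENNReal.tsum_add]
      _ ≤ M * (ε₁ + ε₁) := by
          apply mul_le_mul' le_rfl
          apply add_le_add hEsum
          calc ∑' j, c j = ε₁ * ∑' j, (2⁻¹ : ℝ≥0∞) ^ (j+1) := by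
                simp only [hcdef]
                exact ENNReal.tsum_mul_left
            _ = ε₁ * (2⁻¹ * (1 - 2⁻¹)⁻¹) := by
                rw [ENNReal.tsum_geometric_add_one]
            _ = ε₁ := by
                rw [ENNReal.one_sub_inv_two, inv_inv, ENNReal.inv_mul_cancel two_ne_zero ENNReal.ofNat_ne_top, mul_one]
            _ ≤ ε₁ := le_rfl
      _ ≤ ε := by
          have : M * (ε₁ + ε₁) ≤ (2*(M+1)) * ε₁ := by
            rw [two_mul, add_mul, mul_add]
            gcongr <;> simp [le_add_right]
          refine this.trans ?_
          rw [hε₁def, ENNReal.mul_div_cancel h2M0 h2Mtop]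
          exact min_le_left _ _

lemma prod_closedBall_null {Y : Type*} [EMetricSpace Y] [MeasurableSpace Y] [BorelSpace Y]
    (m : ℕ) {t : ℝ} (ht : 0 < t) {B : Set Y} (hB : μH[t] B = 0) {R : ℝ} (hR : 0 ≤ R) :
    μH[(m:ℝ) + t] ((Metric.closedBall (0 : Fin m → ℝ) R) ×ˢ B) = 0 := by
  have hpos : ∀ n : ℕ, (0:ℝ≥0∞) < ((n:ℝ≥0∞))⁻¹ :=
    fun n => ENNReal.inv_pos.mpr (ENNReal.natCast_ne_top n)
  choose ι hcount U hcov hdiam hsum using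
    fun n : ℕ => prod_cover_exists m ht hB hR (hpos n) (hpos n)
  letI : ∀ n, Countable (ι n) := fun n => hcount n
  refine le_antisymm ?_ zero_le
  calc μH[(m:ℝ) + t] ((Metric.closedBall (0 : Fin m → ℝ) R) ×ˢ B)
      ≤ liminf (fun n => ∑' i, EMetric.diam (U n i) ^ ((m:ℝ) + t)) atTop :=
        MeasureTheory.Measure.hausdorffMeasure_le_liminf_tsum _ _ (fun n : ℕ => ((n:ℝ≥0∞))⁻¹)
          ENNReal.tendsto_inv_nat_nhds_zero U
          (Eventually.of_forall hdiam) (Eventually.of_forall hcov)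
    _ ≤ liminf (fun n : ℕ => ((n:ℝ≥0∞))⁻¹) atTop := by
        apply liminf_le_liminf (Eventually.of_forall hsum)
    _ = 0 := ENNReal.tendsto_inv_nat_nhds_zero.liminf_eq

lemma univ_prod_null {Y : Type*} [EMetricSpace Y] [MeasurableSpace Y] [BorelSpace Y]
    (m : ℕ) {t : ℝ} (ht : 0 < t) {B : Set Y} (hB : μH[t] B = 0) :
    μH[(m:ℝ) + t] ((Set.univ : Set (Fin m → ℝ)) ×ˢ B) = 0 := by
  have : (Set.univ : Set (Fin m → ℝ)) ×ˢ B =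
      ⋃ p : ℕ, (Metric.closedBall (0 : Fin m → ℝ) p) ×ˢ B := by
    rw [← Set.iUnion_prod_const]
    congr 1
    symm
    apply Set.eq_univ_of_forall
    intro x
    obtain ⟨p, hp⟩ := exists_nat_ge (dist x 0)
    exact Set.mem_iUnion.mpr ⟨p, Metric.mem_closedBall.mpr hp⟩
  rw [this]
  exact measure_iUnion_null fun p => prod_closedBall_null m ht hB (Nat.cast_nonneg p)

lemma univ_prod_null_euclid {Y : Type*} [EMetricSpace Y] [MeasurableSpace Y] [BorelSpace Y]
    (m : ℕ) {t : ℝ} (ht : 0 < t) {B : Set Y} (hB : μH[t] B = 0) :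
    μH[(m:ℝ) + t] ((Set.univ : Set (EuclideanSpace ℝ (Fin m))) ×ˢ B) = 0 := by
  set e := WithLp.equiv 2 (Fin m → ℝ) with he
  have hanti : AntilipschitzWith ((Fintype.card (Fin m) : ℝ≥0) ^ ((1:ℝ≥0∞)/2).toReal) e :=
    PiLp.antilipschitzWith_ofLp 2 _
  have hlip : LipschitzWith ((Fintype.card (Fin m) : ℝ≥0) ^ ((1:ℝ≥0∞)/2).toReal) e.symm :=
    hanti.to_rightInverse e.right_inv
  set K := (((Fintype.card (Fin m) : ℝ≥0) ^ ((1:ℝ≥0∞)/2).toReal) * 1) ⊔ 1 with hK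
  have hF : LipschitzWith K (fun p : (Fin m → ℝ) × Y => (e.symm p.1, p.2)) := by
    apply LipschitzWith.prodMk
    · exact hlip.comp LipschitzWith.prod_fst
    · exact LipschitzWith.prod_snd
  have himg : (fun p : (Fin m → ℝ) × Y => (e.symm p.1, p.2)) ''
      ((Set.univ : Set (Fin m → ℝ)) ×ˢ B) = (Set.univ : Set (EuclideanSpace ℝ (Fin m))) ×ˢ B := by
    ext ⟨u, y⟩
    constructor
    · rintro ⟨⟨x, b⟩, ⟨-, hb⟩, h⟩
      obtain ⟨h1, h2⟩ := Prod.mk.injEq .. ▸ h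
      exact ⟨trivial, by rw [← h2]; exact hb⟩
    · rintro ⟨-, hy⟩
      exact ⟨(e u, y), ⟨trivial, hy⟩, by simp⟩
  have h0 : (0:ℝ) ≤ (m:ℝ) + t := by positivity
  have := hF.hausdorffMeasure_image_le h0 ((Set.univ : Set (Fin m → ℝ)) ×ˢ B)
  rw [himg, univ_prod_null m ht hB, mul_zero] at this
  exact le_antisymm this zero_le

lemma volume_null_of_hausdorff_null (k : ℕ) {s : Set (EuclideanSpace ℝ (Fin k))}
    (h : μH[(k:ℝ)] s = 0) : volume s = 0 := by
  set e := WithLp.equiv 2 (Fin k → ℝ) with he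
  have hlip : LipschitzWith 1 e := PiLp.lipschitzWith_ofLp 2 _
  have himg : μH[(k:ℝ)] (e '' s) = 0 := by
    have := hlip.hausdorffMeasure_image_le (by positivity : (0:ℝ) ≤ (k:ℝ)) s
    rw [h, mul_zero] at this
    exact le_antisymm this zero_le
  have hvol : volume (e '' s) = 0 := by
    have hpi : (μH[(k:ℝ)] : Measure (Fin k → ℝ)) = volume := by
      have := hausdorffMeasure_pi_real (ι := Fin k)
      simpa using this
    rw [← hpi]; exact himg
  -- transfer back
  set T := toMeasurable volume (e '' s) with hT
  have hTmeas : MeasurableSet T := measurableSet_toMeasurable _ _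
  have hTnull : volume T = 0 := by rw [hT, measure_toMeasurable]; exact hvol
  have hsub : s ⊆ (MeasurableEquiv.toLp 2 (Fin k → ℝ)).symm ⁻¹' T := by
    intro x hx
    have : e x ∈ T := subset_toMeasurable _ _ ⟨x, hx, rfl⟩
    exact this
  have := (EuclideanSpace.volume_preserving_symm_measurableEquiv_toLp (Fin k)).measure_preimage
    hTmeas.nullMeasurableSet
  exact measure_mono_null hsub (by rw [this]; exact hTnull)

lemma image_sub_null {m k : ℕ} {t : ℝ} (ht : 0 < t)
    {B : Set (EuclideanSpace ℝ (Fin k))} (hB : μH[t] B = 0)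
    (S : Set (EuclideanSpace ℝ (Fin m))) {C : ℝ≥0}
    (f : S → EuclideanSpace ℝ (Fin k)) (hf : LipschitzWith C f) :
    μH[(m:ℝ) + t] ((fun p : S × EuclideanSpace ℝ (Fin k) => p.2 - f p.1) ''
      (Set.univ ×ˢ B)) = 0 := by
  have h0 : (0:ℝ) ≤ (m:ℝ) + t := by positivity
  -- the inclusion is an isometry
  set j : S × EuclideanSpace ℝ (Fin k) → EuclideanSpace ℝ (Fin m) × EuclideanSpace ℝ (Fin k) :=
    fun p => ((p.1 : EuclideanSpace ℝ (Fin m)), p.2) with hj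
  have hjiso : Isometry j := fun p q => rfl
  have hjimg : j '' (Set.univ ×ˢ B) = S ×ˢ B := by
    ext ⟨u, y⟩
    constructor
    · rintro ⟨⟨x, b⟩, ⟨-, hb⟩, h⟩
      obtain ⟨h1, h2⟩ := Prod.mk.injEq .. ▸ h
      exact ⟨h1 ▸ x.2, h2 ▸ hb⟩
    · rintro ⟨hu, hy⟩
      exact ⟨(⟨u, hu⟩, y), ⟨trivial, hy⟩, rfl⟩
  have hsubnull : μH[(m:ℝ) + t] ((Set.univ : Set S) ×ˢ B) = 0 := by
    rw [← hjiso.hausdorffMeasure_image (Or.inl h0), hjimg]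
    exact measure_mono_null (Set.prod_mono (Set.subset_univ _) subset_rfl)
      (univ_prod_null_euclid m ht hB)
  -- the difference map is Lipschitz
  have hg : LipschitzWith (C + 1) (fun p : S × EuclideanSpace ℝ (Fin k) => p.2 - f p.1) := by
    apply LipschitzWith.of_dist_le_mul
    intro p q
    have h1 : dist (p.2 - f p.1) (q.2 - f q.1) ≤ dist p.2 q.2 + dist (f p.1) (f q.1) :=
      dist_sub_sub_le _ _ _ _
    have h2 : dist (f p.1) (f q.1) ≤ (C:ℝ) * dist p.1 q.1 := hf.dist_le_mul _ _
    have h3 : dist p.1 q.1 ≤ dist p q := by rw [Prod.dist_eq]; exact le_max_left _ _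
    have h4 : dist p.2 q.2 ≤ dist p q := by rw [Prod.dist_eq]; exact le_max_right _ _
    have hC : (0:ℝ) ≤ C := C.coe_nonneg
    calc dist (p.2 - f p.1) (q.2 - f q.1) ≤ dist p.2 q.2 + (C:ℝ) * dist p.1 q.1 := by linarith
      _ ≤ dist p q + (C:ℝ) * dist p q := by nlinarith [dist_nonneg (x := p) (y := q)]
      _ = ((C + 1 : ℝ≥0) : ℝ) * dist p q := by push_cast; ring
  have := hg.hausdorffMeasure_image_le h0 ((Set.univ : Set S) ×ˢ B)
  rw [hsubnull, mul_zero] at this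
  exact le_antisymm this zero_le

end Auxiliary

/-- **Instantaneous Hamiltonian displaceability of small sets.**
If `A ⊆ ℝ^{2n}` is countably `m`-rectifiable and `B ⊆ ℝ^{2n}` is `(2n-m)`-negligible
(its `(2n-m)`-dimensional Hausdorff measure vanishes), then there is a vector `v₀`
such that for almost every `t ∈ ℝ` the translate `A + t • v₀` is disjoint from `B`. -/
theorem instantaneous_displaceability (n m : ℕ) (hm : m ≤ 2 * n)
    (A B : Set (EuclideanSpace ℝ (Fin (2 * n))))
    (hA : CountablyRectifiable m A)
    (hB : μH[((2 * n - m : ℕ) : ℝ)] B = 0) :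
    ∃ v₀ : EuclideanSpace ℝ (Fin (2 * n)),
      volume {t : ℝ | ∃ a ∈ A, a + t • v₀ ∈ B} = 0 := by
  obtain ⟨S, f, C, hf, hAeq⟩ := hA
  rcases eq_or_lt_of_le hm with heq | hlt
  · -- m = 2n, so B is empty
    have h0 : (2*n - m : ℕ) = 0 := by omega
    rw [h0] at hB
    have hBempty : B = ∅ := by
      by_contra h
      have h1 := MeasureTheory.Measure.one_le_hausdorffMeasure_zero_of_nonempty
        (Set.nonempty_iff_ne_empty.mpr h)
      rw [show ((0:ℕ):ℝ) = 0 from by simp] at hB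
      rw [hB] at h1
      exact (by simp at h1)
    refine ⟨0, ?_⟩
    have : {t : ℝ | ∃ a ∈ A, a + t • (0 : EuclideanSpace ℝ (Fin (2*n))) ∈ B} = ∅ := by
      ext τ; simp [hBempty]
    rw [this]; simp
  · -- m < 2n
    set t : ℝ := ((2*n - m : ℕ) : ℝ) with htdef
    have ht : 0 < t := by
      have : 0 < 2*n - m := by omega
      exact_mod_cast Nat.cast_pos.mpr this
    have hmt : (m:ℝ) + t = ((2*n : ℕ) : ℝ) := by
      rw [htdef, Nat.cast_sub hm]; ring
    -- the difference set D is null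
    set D : Set (EuclideanSpace ℝ (Fin (2*n))) :=
      ⋃ i, ((fun p : (S i) × EuclideanSpace ℝ (Fin (2*n)) => p.2 - f i p.1) ''
        (Set.univ ×ˢ B)) with hD
    have hDnull : μH[((2*n : ℕ):ℝ)] D = 0 := by
      apply measure_iUnion_null
      intro i
      have := image_sub_null ht hB (S i) (f i) (hf i)
      rwa [hmt] at this
    have hDvol : volume D = 0 := volume_null_of_hausdorff_null (2*n) hDnull
    set D' := toMeasurable volume D with hD'
    have hD'meas : MeasurableSet D' := measurableSet_toMeasurable _ _
    have hD'null : volume D' = 0 := by rw [hD', measure_toMeasurable]; exact hDvol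
    have hDsub : D ⊆ D' := subset_toMeasurable _ _
    -- Fubini argument
    set F : Set (ℝ × EuclideanSpace ℝ (Fin (2*n))) := {p | p.1 ≠ 0 ∧ p.1 • p.2 ∈ D'} with hF
    have hFmeas : MeasurableSet F := by
      apply MeasurableSet.inter
      · exact measurable_fst (measurableSet_singleton (0:ℝ)).compl
      · exact (measurable_fst.smul measurable_snd) hD'meas
    have hFnull : (volume.prod volume) F = 0 := by
      rw [MeasureTheory.Measure.measure_prod_null hFmeas]
      have hae : ∀ᵐ τ : ℝ, τ ≠ 0 := by
        rw [ae_iff]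
        simpa using (measure_singleton (0:ℝ))
      filter_upwards [hae] with τ hτ
      have hslice : Prod.mk τ ⁻¹' F = (τ • ·) ⁻¹' D' := by
        ext v
        simp [hF, hτ]
      show volume (Prod.mk τ ⁻¹' F) = 0
      rw [hslice, MeasureTheory.Measure.addHaar_preimage_smul volume hτ, hD'null, mul_zero]
    have hswap : (volume.prod volume) (Prod.swap ⁻¹' F : Set (EuclideanSpace ℝ (Fin (2*n)) × ℝ)) = 0 := by
      rw [(MeasureTheory.Measure.measurePreserving_swap).measure_preimage hFmeas.nullMeasurableSet]
      exact hFnull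
    have haev := MeasureTheory.Measure.measure_ae_null_of_prod_null hswap
    have hvolne : (volume : Measure (EuclideanSpace ℝ (Fin (2*n)))) ≠ 0 := by
      intro h0
      have := isOpen_univ.measure_pos (volume : Measure (EuclideanSpace ℝ (Fin (2*n)))) Set.univ_nonempty
      rw [h0] at this
      simp at this
    haveI : (ae (volume : Measure (EuclideanSpace ℝ (Fin (2*n))))).NeBot := ae_neBot.mpr hvolne
    obtain ⟨v₀, hv₀⟩ := haev.exists
    refine ⟨v₀, ?_⟩
    have hsub : {τ : ℝ | ∃ a ∈ A, a + τ • v₀ ∈ B} ⊆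
        {0} ∪ (Prod.mk v₀ ⁻¹' (Prod.swap ⁻¹' F)) := by
      rintro τ ⟨a, haA, hab⟩
      rcases eq_or_ne τ 0 with h | h
      · exact Or.inl (by simp [h])
      · refine Or.inr ?_
        have haU : a ∈ ⋃ i, Set.range (f i) := hAeq ▸ haA
        obtain ⟨i, hi⟩ := Set.mem_iUnion.mp haU
        obtain ⟨si, hsi⟩ := Set.mem_range.mp hi
        have hmem : τ • v₀ ∈ D := by
          apply Set.mem_iUnion.mpr
          refine ⟨i, ⟨(si, a + τ • v₀), ⟨trivial, hab⟩, ?_⟩⟩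
          simp [hsi]
        exact ⟨h, hDsub hmem⟩
    apply measure_mono_null hsub
    apply measure_union_null (measure_singleton 0)
    simpa using hv₀
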